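/- Let H be a real Hilbert space and let n ≥ 2. For each i ∈ {1,…,n}, let T_i : H → H be conically θ_i-averaged (θ_i > 0) and let (x_{i,k})_k be a sequence in H. Suppose that: (a) for each i, x_{i,k} ⇀ x_i; (b) for each i, T_i(x_{i,k}) ⇀ 2θ_i y + (1 − 2θ_i)x_i; (c) Σ_{i=1}^n (x_{i,k} − T_i(x_{i,k}))/(2θ_i) → −ny + Σ_{i=1}^n x_i strongly; (d) for all i, j, (x_{i,k} − x_{j,k}) − ((x_{i,k} − T_i(x_{i,k}))/(2θ_i) − (x_{j,k} − T_j(x_{j,k}))/(2θ_j)) → 0 strongly. Then T_i(x_i) = 2θ_i y + (1 − 2θ_i)x_i for every i ∈ {1,…,n}. -/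

import Mathlib

open scoped InnerProductSpace
open Filter

private lemma weak_bdd {H : Type*} [NormedAddCommGroup H] [InnerProductSpace ℝ H]
    [CompleteSpace H] (z : ℕ → H) (zl : H)
    (h : ∀ w : H, Filter.Tendsto (fun k => ⟪z k, w⟫_ℝ) Filter.atTop (nhds ⟪zl, w⟫_ℝ)) :
    ∃ C, ∀ k, ‖z k‖ ≤ C := by
  have hb : ∀ w : H, ∃ C, ∀ k, ‖(innerSL ℝ (z k)) w‖ ≤ C := by
    intro w
    obtain ⟨C, hC⟩ := ((h w).norm).bddAbove_range
    exact ⟨C, fun k => by simpa using hC (Set.mem_range_self k)⟩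
  obtain ⟨C, hC⟩ := banach_steinhaus hb
  exact ⟨C, fun k => by simpa [innerSL_apply_norm] using hC k⟩

private lemma inner_tendsto_zero_left {H : Type*} [NormedAddCommGroup H]
    [InnerProductSpace ℝ H] (f g : ℕ → H) (C : ℝ) (hf : ∀ k, ‖f k‖ ≤ C)
    (hg : Filter.Tendsto g Filter.atTop (nhds 0)) :
    Filter.Tendsto (fun k => ⟪f k, g k⟫_ℝ) Filter.atTop (nhds 0) := by
  rw [tendsto_zero_iff_abs_tendsto_zero]
  apply squeeze_zero (fun k => abs_nonneg _) (g := fun k => C * ‖g k‖)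
  · intro k
    calc |⟪f k, g k⟫_ℝ| ≤ ‖f k‖ * ‖g k‖ := abs_real_inner_le_norm _ _
      _ ≤ C * ‖g k‖ := mul_le_mul_of_nonneg_right (hf k) (norm_nonneg _)
  · have := (hg.norm).const_mul C
    simpa using this

private lemma inner_tendsto_zero_right {H : Type*} [NormedAddCommGroup H]
    [InnerProductSpace ℝ H] (f g : ℕ → H) (C : ℝ) (hg : ∀ k, ‖g k‖ ≤ C)
    (hf : Filter.Tendsto f Filter.atTop (nhds 0)) :
    Filter.Tendsto (fun k => ⟪f k, g k⟫_ℝ) Filter.atTop (nhds 0) := by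
  have := inner_tendsto_zero_left g f C hg hf
  refine this.congr fun k => real_inner_comm _ _

/-- Demiclosedness principle for conically averaged operators. -/
theorem demiclosedness_conically_averaged {H : Type*} [NormedAddCommGroup H]
    [InnerProductSpace ℝ H] [CompleteSpace H] (n : ℕ) (hn : 2 ≤ n)
    (θ : Fin n → ℝ) (hθ : ∀ i, 0 < θ i)
    (T : Fin n → H → H)
    (hT : ∀ i, ∃ R : H → H, (∀ x y : H, ‖R x - R y‖ ≤ ‖x - y‖) ∧
      ∀ x : H, T i x = (1 - θ i) • x + θ i • R x)
    (x : Fin n → ℕ → H) (xl : Fin n → H) (y : H)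
    (ha : ∀ i, ∀ u : H,
      Filter.Tendsto (fun k => ⟪x i k, u⟫_ℝ) Filter.atTop (nhds ⟪xl i, u⟫_ℝ))
    (hb : ∀ i, ∀ u : H, Filter.Tendsto (fun k => ⟪T i (x i k), u⟫_ℝ) Filter.atTop
      (nhds ⟪(2 * θ i) • y + (1 - 2 * θ i) • xl i, u⟫_ℝ))
    (hc : Filter.Tendsto (fun k => ∑ i, (2 * θ i)⁻¹ • (x i k - T i (x i k)))
      Filter.atTop (nhds ((-(n : ℝ)) • y + ∑ i, xl i)))
    (hd : ∀ i j, Filter.Tendsto (fun k => (x i k - x j k) -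
        ((2 * θ i)⁻¹ • (x i k - T i (x i k)) - (2 * θ j)⁻¹ • (x j k - T j (x j k))))
      Filter.atTop (nhds 0)) :
    ∀ i, T i (xl i) = (2 * θ i) • y + (1 - 2 * θ i) • xl i := by
  classical
  choose R hR hTR using hT
  have hθ2 : ∀ i, (2 * θ i) ≠ 0 := fun i => mul_ne_zero two_ne_zero (hθ i).ne'
  -- basic identity
  have hid : ∀ i (z : H), (2 * θ i)⁻¹ • (z - T i z) = (2:ℝ)⁻¹ • (z - R i z) := by
    intro i z
    rw [hTR i z]
    have h1 : z - ((1 - θ i) • z + θ i • R i z) = θ i • (z - R i z) := by module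
    rw [h1, smul_smul]
    congr 1
    rw [mul_inv, mul_assoc, inv_mul_cancel₀ (hθ i).ne', mul_one]
  set F : Fin n → ℕ → H := fun i k => (2 * θ i)⁻¹ • (x i k - T i (x i k)) with hF
  set u : Fin n → ℕ → H := fun i k => x i k - F i k with hu
  set v : Fin n → H := fun i => xl i - (2 * θ i)⁻¹ • (xl i - T i (xl i)) with hv
  set q : Fin n → H := fun i => xl i - v i with hq
  -- key inequality from firm nonexpansiveness
  have hkey : ∀ i k, 0 ≤ ⟪F i k - q i, u i k - v i⟫_ℝ := by
    intro i k
    have h1 : F i k = (2:ℝ)⁻¹ • (x i k - R i (x i k)) := hid i (x i k)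
    have h2 : q i = (2:ℝ)⁻¹ • (xl i - R i (xl i)) := by
      have : q i = xl i - (xl i - (2 * θ i)⁻¹ • (xl i - T i (xl i))) := rfl
      rw [this, hid i (xl i)]; abel
    have h3 : u i k - v i
        = (2:ℝ)⁻¹ • ((x i k - xl i) + (R i (x i k) - R i (xl i))) := by
      have : u i k - v i = (x i k - F i k)
          - (xl i - (2 * θ i)⁻¹ • (xl i - T i (xl i))) := rfl
      rw [this, h1, hid i (xl i)]; module
    have h4 : F i k - q i
        = (2:ℝ)⁻¹ • ((x i k - xl i) - (R i (x i k) - R i (xl i))) := by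
      rw [h1, h2]; module
    rw [h3, h4, real_inner_smul_left, real_inner_smul_right]
    have h5 : ⟪(x i k - xl i) - (R i (x i k) - R i (xl i)),
        (x i k - xl i) + (R i (x i k) - R i (xl i))⟫_ℝ
        = ‖x i k - xl i‖^2 - ‖R i (x i k) - R i (xl i)‖^2 := by
      rw [inner_sub_left, inner_add_right, inner_add_right,
        real_inner_self_eq_norm_sq, real_inner_self_eq_norm_sq,
        real_inner_comm (R i (x i k) - R i (xl i)) (x i k - xl i)]
      ring
    rw [h5]
    have h6 := hR i (x i k) (xl i)
    nlinarith [norm_nonneg (x i k - xl i), norm_nonneg (R i (x i k) - R i (xl i))]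
  -- weak convergence of F i k to xl i - y
  have hFw : ∀ i (w : H), Tendsto (fun k => ⟪F i k, w⟫_ℝ) atTop
      (nhds ⟪xl i - y, w⟫_ℝ) := by
    intro i w
    have h0 : Tendsto (fun k => (2*θ i)⁻¹ * (⟪x i k, w⟫_ℝ - ⟪T i (x i k), w⟫_ℝ)) atTop
        (nhds ((2*θ i)⁻¹ * (⟪xl i, w⟫_ℝ - ⟪(2*θ i) • y + (1-2*θ i) • xl i, w⟫_ℝ))) :=
      ((ha i w).sub (hb i w)).const_mul _
    have he : (2*θ i)⁻¹ * (⟪xl i, w⟫_ℝ - ⟪(2*θ i) • y + (1-2*θ i) • xl i, w⟫_ℝ)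
        = ⟪xl i - y, w⟫_ℝ := by
      rw [inner_add_left, real_inner_smul_left, real_inner_smul_left, inner_sub_left]
      field_simp [(hθ i).ne']
      ring
    rw [he] at h0
    refine h0.congr fun k => ?_
    simp only [hF, real_inner_smul_left, inner_sub_left]
  -- weak convergence of u i k to y
  have huw : ∀ i (w : H), Tendsto (fun k => ⟪u i k, w⟫_ℝ) atTop (nhds ⟪y, w⟫_ℝ) := by
    intro i w
    have h0 := (ha i w).sub (hFw i w)
    have he : ⟪xl i, w⟫_ℝ - ⟪xl i - y, w⟫_ℝ = ⟪y, w⟫_ℝ := by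
      rw [inner_sub_left]; ring
    rw [he] at h0
    refine h0.congr fun k => ?_
    simp only [hu, inner_sub_left]
  -- strong convergence of differences of u
  have hust : ∀ i j, Tendsto (fun k => u i k - u j k) atTop (nhds 0) := by
    intro i j
    refine (hd i j).congr fun k => ?_
    rw [hu]; dsimp only; rw [hF]; dsimp only; abel
  -- boundedness
  have hFq : ∀ i, ∃ C, ∀ k, ‖F i k - q i‖ ≤ C := by
    intro i
    apply weak_bdd _ (xl i - y - q i)
    intro w
    have h0 := (hFw i w).sub (tendsto_const_nhds (x := ⟪q i, w⟫_ℝ))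
    refine Tendsto.congr (fun k => (inner_sub_left _ _ _).symm) ?_
    rwa [← inner_sub_left] at h0
  have i0 : Fin n := ⟨0, by omega⟩
  have hu0b : ∃ C, ∀ k, ‖u i0 k - y‖ ≤ C := by
    apply weak_bdd _ (y - y)
    intro w
    have h0 := (huw i0 w).sub (tendsto_const_nhds (x := ⟪y, w⟫_ℝ))
    refine Tendsto.congr (fun k => (inner_sub_left _ _ _).symm) ?_
    rwa [← inner_sub_left] at h0
  -- part A
  have hA : Tendsto (fun k => ∑ i, ⟪F i k - q i, u i k - u i0 k⟫_ℝ) atTop (nhds 0) := by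
    have h0 : Tendsto (fun k => ∑ i : Fin n, ⟪F i k - q i, u i k - u i0 k⟫_ℝ) atTop
        (nhds (∑ _i : Fin n, (0:ℝ))) := by
      apply tendsto_finset_sum
      intro i _
      obtain ⟨C, hC⟩ := hFq i
      exact inner_tendsto_zero_left _ _ C hC (hust i i0)
    simpa using h0
  -- part B
  set L : H := ((-(n:ℝ)) • y + ∑ i, xl i) - ∑ i, q i with hL
  have hg : Tendsto (fun k => (∑ i, (F i k - q i)) - L) atTop (nhds 0) := by
    have h0 : Tendsto (fun k => (∑ i, F i k) - ((∑ i, q i) + L)) atTop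
        (nhds (((-(n:ℝ)) • y + ∑ i, xl i) - ((∑ i, q i) + L))) :=
      hc.sub tendsto_const_nhds
    have he : (((-(n:ℝ)) • y + ∑ i, xl i) - ((∑ i, q i) + L)) = 0 := by
      rw [hL]; abel
    rw [he] at h0
    refine h0.congr fun k => ?_
    have hsplit : ∑ i, (F i k - q i) = (∑ i, F i k) - ∑ i, q i :=
      Finset.sum_sub_distrib _ _
    rw [hsplit]; abel
  have hB : Tendsto (fun k => ⟪∑ i, (F i k - q i), u i0 k - y⟫_ℝ) atTop (nhds 0) := by
    obtain ⟨C, hC⟩ := hu0b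
    have h1 : Tendsto (fun k => ⟪(∑ i, (F i k - q i)) - L, u i0 k - y⟫_ℝ) atTop
        (nhds 0) := inner_tendsto_zero_right _ _ C hC hg
    have h2 : Tendsto (fun k => ⟪L, u i0 k - y⟫_ℝ) atTop (nhds 0) := by
      have h0 := (huw i0 L).sub (tendsto_const_nhds (x := ⟪y, L⟫_ℝ))
      rw [sub_self] at h0
      refine h0.congr fun k => ?_
      calc ⟪u i0 k, L⟫_ℝ - ⟪y, L⟫_ℝ = ⟪u i0 k - y, L⟫_ℝ := (inner_sub_left _ _ _).symm
        _ = ⟪L, u i0 k - y⟫_ℝ := real_inner_comm _ _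
    have h3 := h1.add h2
    rw [add_zero] at h3
    refine h3.congr fun k => ?_
    rw [inner_sub_left]
    ring
  -- part C
  have hC : Tendsto (fun k => ∑ i, ⟪F i k - q i, y - v i⟫_ℝ) atTop
      (nhds (∑ i, -(‖v i - y‖^2))) := by
    apply tendsto_finset_sum
    intro i _
    have h0 := (hFw i (y - v i)).sub (tendsto_const_nhds (x := ⟪q i, y - v i⟫_ℝ))
    have he : ⟪xl i - y, y - v i⟫_ℝ - ⟪q i, y - v i⟫_ℝ = -(‖v i - y‖^2) := by
      rw [← inner_sub_left]
      have hqe : xl i - y - q i = v i - y := by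
        have : q i = xl i - v i := rfl
        rw [this]; abel
      rw [hqe, show y - v i = -(v i - y) by abel, inner_neg_right,
        real_inner_self_eq_norm_sq]
    rw [he] at h0
    refine h0.congr fun k => ?_
    simp only [hq, inner_sub_left]
  -- combine
  have hS : Tendsto (fun k => ∑ i, ⟪F i k - q i, u i k - v i⟫_ℝ) atTop
      (nhds (∑ i, -(‖v i - y‖^2))) := by
    have h0 := (hA.add hB).add hC
    rw [add_zero, zero_add] at h0
    refine h0.congr fun k => ?_
    rw [sum_inner, ← Finset.sum_add_distrib, ← Finset.sum_add_distrib]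
    apply Finset.sum_congr rfl
    intro i _
    rw [← inner_add_right, ← inner_add_right]
    congr 1
    abel
  have hle : (0:ℝ) ≤ ∑ i, -(‖v i - y‖^2) :=
    ge_of_tendsto' hS (fun k => Finset.sum_nonneg fun i _ => hkey i k)
  have hsum : ∑ i, ‖v i - y‖^2 ≤ 0 := by
    have : -(∑ i, ‖v i - y‖^2) = ∑ i, -(‖v i - y‖^2) := by
      rw [Finset.sum_neg_distrib]
    linarith [hle, this]
  have hv0 : ∀ i, v i = y := by
    intro i
    have hnn : ∀ j ∈ Finset.univ, (0:ℝ) ≤ ‖v j - y‖^2 := fun j _ => sq_nonneg _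
    have h0 := (Finset.sum_eq_zero_iff_of_nonneg hnn).1
      (le_antisymm hsum (Finset.sum_nonneg hnn)) i (Finset.mem_univ i)
    have h1 : ‖v i - y‖ = 0 := by
      have := sq_eq_zero_iff.mp h0
      exact this
    rw [norm_eq_zero, sub_eq_zero] at h1
    exact h1
  -- conclude
  intro i
  have h := hv0 i
  have h2 : (2 * θ i)⁻¹ • (xl i - T i (xl i)) = xl i - y := by
    have hvi : v i = xl i - (2 * θ i)⁻¹ • (xl i - T i (xl i)) := rfl
    rw [hvi] at h
    rw [← h]; abel
  have h3 : xl i - T i (xl i) = (2 * θ i) • (xl i - y) := by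
    have h4 := congrArg (fun z : H => (2 * θ i) • z) h2
    simp only [smul_smul, mul_inv_cancel₀ (hθ2 i), one_smul] at h4
    exact h4
  have h5 : T i (xl i) = xl i - (2 * θ i) • (xl i - y) := by
    rw [← h3]; abel
  rw [h5]
  module
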